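/- Let B1 and B2 be two linearly independent skew-symmetric bilinear forms on a finite-dimensional real vector space V, and for t = (t1,t2) ∈ ℝ² put B^t = t1·B1 + t2·B2. Suppose the kernel of each form B^t is nontrivial, set r = min_{t ∈ ℝ²∖{0}} dim ker B^t (so r > 0) and T = {t ∈ ℝ²∖{0} : dim ker B^t = r}. Then the subspace L = Σ_{t ∈ T} ker B^t of V is isotropic with respect to every form B^t, t ∈ ℝ², i.e. B^t(L,L) = 0 for all t ∈ ℝ². -/

import Mathlib

open Module

open Module Matrix
set_option maxHeartbeats 1000000

lemma core_aux {V : Type*} [AddCommGroup V] [Module ℝ V] [FiniteDimensional ℝ V]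
    (C D : V →ₗ[ℝ] V →ₗ[ℝ] ℝ)
    (hC : ∀ v w, C v w = - C w v) (hD : ∀ v w, D v w = - D w v)
    (x y : V) (hx : C x = 0) (hy : C y = 0) (hxy : D x y ≠ 0) :
    ∃ ε : ℝ, ε ≠ 0 ∧
      finrank ℝ (LinearMap.ker (C + ε • D)) + 2 ≤ finrank ℝ (LinearMap.ker C) := by
  classical
  obtain ⟨W, hW⟩ := Submodule.exists_isCompl (LinearMap.ker C)
  set n := finrank ℝ V with hn
  set k := finrank ℝ W with hk
  let b : Basis (Fin k) ℝ W := finBasis ℝ W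
  -- the vectors x, y
  let v : Fin 2 → V := ![x, y]
  have hCv : ∀ j, C (v j) = 0 := by
    intro j
    fin_cases j <;> simpa [v]
  -- the extended family
  let f : Fin k ⊕ Fin 2 → V := Sum.elim (fun i => (b i : V)) v
  -- Gram matrix blocks
  let A0 : Matrix (Fin k) (Fin k) ℝ := Matrix.of fun i j => C (b i) (b j)
  let Am : ℝ → Matrix (Fin k) (Fin k) ℝ :=
    fun ε => Matrix.of fun i j => C (b i) (b j) + ε * D (b i) (b j)
  let Bm : ℝ → Matrix (Fin k) (Fin 2) ℝ :=
    fun ε => Matrix.of fun i j => ε * D (b i) (v j)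
  let Cm : Matrix (Fin 2) (Fin k) ℝ := Matrix.of fun i j => D (v i) (b j)
  let Dm : Matrix (Fin 2) (Fin 2) ℝ := Matrix.of fun i j => D (v i) (v j)
  -- A0 has nonzero determinant
  have hA0 : A0.det ≠ 0 := by
    intro h0
    obtain ⟨c, hc0, hcA⟩ := Matrix.exists_vecMul_eq_zero_iff.mpr h0
    set w : W := ∑ i, c i • b i with hw
    have hwker : ∀ j, C ((w : V)) ((b j : V)) = 0 := by
      intro j
      have := congrFun hcA j
      simp only [Matrix.vecMul, dotProduct, A0, Matrix.of_apply] at this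
      rw [hw]
      push_cast
      simp only [map_sum, _root_.map_smul, LinearMap.sum_apply, LinearMap.smul_apply,
        smul_eq_mul]
      simpa using this
    have hwW : ∀ u : W, C ((w : V)) ((u : V)) = 0 := by
      intro u
      have hu : (u : V) = ∑ i, b.repr u i • (b i : V) := by
        conv_lhs => rw [← b.sum_repr u]
        push_cast
        rfl
      rw [hu]
      simp only [map_sum, _root_.map_smul, smul_eq_mul]
      simp [hwker]
    have hwkerC : (w : V) ∈ LinearMap.ker C := by
      rw [LinearMap.mem_ker]
      ext z
      have hz : z ∈ LinearMap.ker C ⊔ W := by rw [hW.sup_eq_top]; trivial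
      obtain ⟨p, hp, q, hq, rfl⟩ := Submodule.mem_sup.mp hz
      have hp0 : C p = 0 := hp
      have h1 : C ((w : V)) p = 0 := by
        rw [hC]
        simp [hp0]
      have h2 : C ((w : V)) q = 0 := hwW ⟨q, hq⟩
      simp only [map_add, LinearMap.zero_apply]
      rw [h1, h2, add_zero]
    have : (w : V) = 0 := by
      have := hW.disjoint
      have hmem : (w : V) ∈ LinearMap.ker C ⊓ W := ⟨hwkerC, w.2⟩
      rwa [hW.inf_eq_bot, Submodule.mem_bot] at hmem
    have hw0 : w = 0 := Subtype.coe_injective this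
    have : c = 0 := by
      have hli := b.linearIndependent
      rw [Fintype.linearIndependent_iff] at hli
      funext i
      exact hli c (by rw [← hw, hw0]) i
    exact hc0 this
  -- the polynomial-like function g
  let g : ℝ → ℝ := fun ε => (Matrix.fromBlocks (Am ε) (Bm ε) Cm Dm).det
  have hDxx : D x x = 0 := by have := hD x x; linarith
  have hDyy : D y y = 0 := by have := hD y y; linarith
  have hDyx : D y x = - D x y := hD y x
  have hg0 : g 0 ≠ 0 := by
    have hBm0 : Bm 0 = 0 := by
      ext i j; simp [Bm]
    have hAm0 : Am 0 = A0 := by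
      ext i j; simp [Am, A0]
    have hDmdet : Dm.det = D x y * D x y := by
      rw [Matrix.det_fin_two]
      simp [Dm, v, hDxx, hDyy, hDyx]
    simp only [g, hBm0, hAm0, Matrix.det_fromBlocks_zero₁₂, hDmdet]
    exact mul_ne_zero hA0 (mul_ne_zero hxy hxy)
  have hgcont : Continuous g := by
    apply Continuous.matrix_det
    apply Continuous.matrix_fromBlocks
    · apply continuous_matrix; intro i j
      simp only [Am, Matrix.of_apply]; fun_prop
    · apply continuous_matrix; intro i j
      simp only [Bm, Matrix.of_apply]; fun_prop
    · exact continuous_const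
    · exact continuous_const
  -- choose a good ε ≠ 0
  obtain ⟨ε, hε0, hgε⟩ : ∃ ε : ℝ, ε ≠ 0 ∧ g ε ≠ 0 := by
    have hopen : IsOpen {t : ℝ | g t ≠ 0} := isOpen_ne.preimage hgcont
    obtain ⟨δ, hδ, hball⟩ := Metric.isOpen_iff.mp hopen 0 hg0
    refine ⟨δ / 2, by positivity, hball ?_⟩
    simp only [Metric.mem_ball, dist_zero_right, Real.norm_eq_abs]
    rw [abs_of_pos (by positivity)]
    linarith
  -- the full Gram matrix
  let M : Matrix (Fin k ⊕ Fin 2) (Fin k ⊕ Fin 2) ℝ :=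
    Matrix.fromBlocks (Am ε) (Bm ε) (ε • Cm) (ε • Dm)
  have hMdet : M.det ≠ 0 := by
    have hfact : M = Matrix.fromBlocks (1 : Matrix (Fin k) (Fin k) ℝ) 0 0
        (ε • (1 : Matrix (Fin 2) (Fin 2) ℝ)) * Matrix.fromBlocks (Am ε) (Bm ε) Cm Dm := by
      show Matrix.fromBlocks (Am ε) (Bm ε) (ε • Cm) (ε • Dm) = _
      rw [Matrix.fromBlocks_multiply]
      congr 1 <;> simp [Matrix.smul_mul]
    rw [hfact, Matrix.det_mul, Matrix.det_fromBlocks_zero₂₁, Matrix.det_one, one_mul,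
      Matrix.det_smul, Matrix.det_one]
    simp only [Fintype.card_fin, mul_one]
    exact mul_ne_zero (pow_ne_zero 2 hε0) hgε
  -- M is the Gram matrix of C + ε • D on the family f
  have hMg : ∀ i j, M i j = (C + ε • D) (f i) (f j) := by
    intro i j
    have hCv0 : ∀ (j2 : Fin 2) (z : V), C (v j2) z = 0 := by
      intro j2 z; rw [hCv j2]; simp
    rcases i with i | i <;> rcases j with j | j <;>
      simp [M, Matrix.fromBlocks, Am, Bm, Cm, Dm, f, hCv0, hC (b _ : V) (v _)]
  refine ⟨ε, hε0, ?_⟩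
  -- the evaluation map
  let Φ : V →ₗ[ℝ] (Fin k ⊕ Fin 2 → ℝ) := LinearMap.pi fun i => (C + ε • D) (f i)
  have hkerle : LinearMap.ker (C + ε • D) ≤ LinearMap.ker Φ := by
    intro z hz
    rw [LinearMap.mem_ker] at hz ⊢
    funext i
    have hskew : (C + ε • D) (f i) z = -((C + ε • D) z (f i)) := by
      simp only [LinearMap.add_apply, LinearMap.smul_apply, smul_eq_mul]
      rw [hC (f i) z, hD (f i) z]; ring
    simp only [Φ, LinearMap.pi_apply, hskew, hz]
    simp
  -- Φ is surjective
  have hsurj : Function.Surjective Φ := by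
    intro u
    let ψ : (Fin k ⊕ Fin 2 → ℝ) →ₗ[ℝ] V :=
      ∑ j, (LinearMap.proj j).smulRight (f j)
    have hcomp : ∀ c, Φ (ψ c) = M *ᵥ c := by
      intro c
      funext i
      simp only [Φ, LinearMap.pi_apply, ψ, LinearMap.sum_apply, LinearMap.smulRight_apply,
        LinearMap.proj_apply, map_sum, _root_.map_smul, smul_eq_mul]
      rw [Matrix.mulVec, dotProduct]
      exact Finset.sum_congr rfl fun j _ => by rw [hMg i j]; ring
    refine ⟨ψ (M⁻¹ *ᵥ u), ?_⟩
    rw [hcomp, Matrix.mulVec_mulVec, Matrix.mul_nonsing_inv _ (isUnit_iff_ne_zero.mpr hMdet),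
      Matrix.one_mulVec]
  -- dimension count
  have hrn := LinearMap.finrank_range_add_finrank_ker Φ
  rw [LinearMap.range_eq_top.mpr hsurj, finrank_top] at hrn
  have hcard : finrank ℝ (Fin k ⊕ Fin 2 → ℝ) = k + 2 := by
    rw [Module.finrank_pi]
    simp
  have hKW : finrank ℝ (LinearMap.ker C) + k = n := Submodule.finrank_add_eq_of_isCompl hW
  have hmono : finrank ℝ (LinearMap.ker (C + ε • D)) ≤ finrank ℝ (LinearMap.ker Φ) :=
    Submodule.finrank_mono hkerle
  rw [hcard] at hrn
  omega

set_option maxHeartbeats 1000000 in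
theorem stmt0 {V : Type*} [AddCommGroup V] [Module ℝ V] [FiniteDimensional ℝ V]
    (B1 B2 : V →ₗ[ℝ] V →ₗ[ℝ] ℝ)
    (hskew1 : ∀ v w, B1 v w = - B1 w v)
    (hskew2 : ∀ v w, B2 v w = - B2 w v)
    (hindep : LinearIndependent ℝ ![B1, B2])
    (Bt : ℝ × ℝ → (V →ₗ[ℝ] V →ₗ[ℝ] ℝ))
    (hBt : ∀ t, Bt t = t.1 • B1 + t.2 • B2)
    (hker : ∀ t : ℝ × ℝ, LinearMap.ker (Bt t) ≠ ⊥)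
    (r : ℕ) (hr : 0 < r)
    (hrlb : ∀ t : ℝ × ℝ, t ≠ 0 → r ≤ finrank ℝ (LinearMap.ker (Bt t)))
    (hratt : ∃ t : ℝ × ℝ, t ≠ 0 ∧ finrank ℝ (LinearMap.ker (Bt t)) = r)
    (T : Set (ℝ × ℝ))
    (hT : T = {t : ℝ × ℝ | t ≠ 0 ∧ finrank ℝ (LinearMap.ker (Bt t)) = r})
    (L : Submodule ℝ V)
    (hL : L = ⨆ t ∈ T, LinearMap.ker (Bt t)) :
    ∀ t : ℝ × ℝ, ∀ v ∈ L, ∀ w ∈ L, Bt t v w = 0 := by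
  classical
  -- every form in the pencil is skew-symmetric
  have hskewt : ∀ t : ℝ × ℝ, ∀ v w, Bt t v w = - Bt t w v := by
    intro t v w
    rw [hBt]
    simp only [LinearMap.add_apply, LinearMap.smul_apply, smul_eq_mul]
    rw [hskew1 v w, hskew2 v w]; ring
  -- Bt is linear in the parameter
  have hlin : ∀ (a c : ℝ) (s u : ℝ × ℝ), Bt (a • s + c • u) = a • Bt s + c • Bt u := by
    intro a c s u
    rw [hBt, hBt, hBt]
    simp only [Prod.fst_add, Prod.snd_add, Prod.smul_fst, Prod.smul_snd, smul_eq_mul]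
    module
  -- key step: the kernel of a form with minimal-dimensional kernel is isotropic
  -- with respect to every form in the pencil
  have star : ∀ s ∈ T, ∀ u : ℝ × ℝ, ∀ x ∈ LinearMap.ker (Bt s), ∀ y ∈ LinearMap.ker (Bt s),
      Bt u x y = 0 := by
    intro s hs u x hxm y hym
    by_contra hne
    rw [LinearMap.mem_ker] at hxm hym
    obtain ⟨ε, hε0, hlt⟩ := core_aux (Bt s) (Bt u) (hskewt s) (hskewt u) x y hxm hym hne
    rw [hT] at hs
    obtain ⟨hs0, hsr⟩ := hs
    have heq : Bt s + ε • Bt u = Bt (s + ε • u) := by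
      have h1 := hlin 1 ε s u
      simpa using h1.symm
    rw [heq, hsr] at hlt
    by_cases h0 : s + ε • u = 0
    · rw [h0] at hlt
      have hBt0 : Bt (0 : ℝ × ℝ) = 0 := by rw [hBt]; simp
      rw [hBt0, LinearMap.ker_zero, finrank_top] at hlt
      have h2 : r ≤ finrank ℝ V := hsr ▸ Submodule.finrank_le _
      omega
    · have := hrlb _ h0
      omega
  -- cross terms between kernels of forms in T vanish for every form in the pencil
  have cross : ∀ t : ℝ × ℝ, ∀ s ∈ T, ∀ s' ∈ T, ∀ x ∈ LinearMap.ker (Bt s),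
      ∀ y ∈ LinearMap.ker (Bt s'), Bt t x y = 0 := by
    intro t s hs s' hs' x hxm y hym
    have hs0 : s ≠ 0 := (hT ▸ hs).1
    have hs'0 : s' ≠ 0 := (hT ▸ hs').1
    by_cases hdep : ∃ c : ℝ, s' = c • s
    · -- proportional parameters: same kernel, use `star`
      obtain ⟨c, rfl⟩ := hdep
      have hc : c ≠ 0 := by rintro rfl; simp at hs'0
      have hsm : Bt (c • s) = c • Bt s := by
        have h1 := hlin c 0 s s
        simpa using h1
      rw [hsm, LinearMap.ker_smul _ c hc] at hym
      exact star s hs t x hxm y hym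
    · -- independent parameters: t is a combination of s and s'
      push_neg at hdep
      have hli : LinearIndependent ℝ ![s', s] := by
        rw [linearIndependent_fin2]
        exact ⟨by simpa using hs0, fun a h => hdep a (by simpa using h.symm)⟩
      have hrange : Set.range ![s', s] = {s', s} := by
        ext z
        constructor
        · rintro ⟨i, rfl⟩; fin_cases i <;> simp
        · rintro (rfl | rfl)
          exacts [⟨0, rfl⟩, ⟨1, rfl⟩]
      have hspan : Submodule.span ℝ ({s', s} : Set (ℝ × ℝ)) = ⊤ := by
        apply Submodule.eq_top_of_finrank_eq
        rw [← hrange, finrank_span_eq_card hli]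
        simp
      obtain ⟨a, c, hac⟩ :=
        Submodule.mem_span_pair.mp (hspan ▸ Submodule.mem_top (x := t))
      have hbt : Bt t = a • Bt s' + c • Bt s := by rw [← hac, hlin]
      rw [LinearMap.mem_ker] at hxm hym
      have h1 : Bt s x y = 0 := by rw [hxm]; simp
      have h2 : Bt s' x y = 0 := by rw [hskewt s' x y, hym]; simp
      rw [hbt]
      simp only [LinearMap.add_apply, LinearMap.smul_apply, smul_eq_mul, h1, h2]
      ring
  -- conclude by bilinearity over the supremum
  intro t v hv w hw
  have step1 : ∀ s ∈ T, ∀ x ∈ LinearMap.ker (Bt s), ∀ w' ∈ L, Bt t x w' = 0 := by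
    intro s hs x hxm w' hw'
    have hle : L ≤ LinearMap.ker (Bt t x) := by
      rw [hL]
      refine iSup₂_le fun s' hs' => fun y hym => ?_
      rw [LinearMap.mem_ker]
      exact cross t s hs s' hs' x hxm y hym
    exact hle hw'
  have hle2 : L ≤ LinearMap.ker ((Bt t).flip w) := by
    rw [hL]
    refine iSup₂_le fun s hs => fun x hxm => ?_
    rw [LinearMap.mem_ker, LinearMap.flip_apply]
    exact step1 s hs x hxm w hw
  have h3 := hle2 hv
  rwa [LinearMap.mem_ker, LinearMap.flip_apply] at h3
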